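/- Let b ≥ 1 be an integer and let R be a real number with 1/2 ≤ R < 1. Let m = m(b, R) be the unique positive real with P(b, m) = R, where P(b, m) = (1/(b−1)!) ∫₀^m t^{b−1} e^{−t} dt. Then m > R·b. -/

import Mathlib

/-- The regularized lower incomplete gamma function
`P (b, m) = (1/(b-1)!) ∫₀^m t^(b-1) e^(-t) dt` for integer shape `b ≥ 1`. -/
noncomputable def regIncGamma (b : ℕ) (m : ℝ) : ℝ :=
  (1 / (Nat.factorial (b - 1) : ℝ)) * ∫ t in (0:ℝ)..m, t ^ (b - 1) * Real.exp (-t)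

open Finset intervalIntegral in
-- derivative of the closed form
lemma hasDeriv_expsum (n : ℕ) (x : ℝ) :
    HasDerivAt (fun y : ℝ => Real.exp (-y) * ∑ k ∈ Finset.range (n+1), y ^ k / k.factorial)
      (-(Real.exp (-x) * x ^ n / n.factorial)) x := by
  have hS : HasDerivAt (fun y : ℝ => ∑ k ∈ Finset.range (n+1), y ^ k / k.factorial)
      (∑ k ∈ Finset.range (n+1), (k : ℝ) * x ^ (k-1) / k.factorial) x := by
    apply HasDerivAt.fun_sum
    intro k _
    simpa [div_eq_mul_inv] using (hasDerivAt_pow k x).div_const (k.factorial : ℝ)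
  have hsum : (∑ k ∈ Finset.range (n+1), (k : ℝ) * x ^ (k-1) / k.factorial)
      = ∑ k ∈ Finset.range n, x ^ k / k.factorial := by
    rw [Finset.sum_range_succ']
    simp only [Nat.cast_zero, zero_mul, Nat.factorial_zero, Nat.cast_one, zero_div, add_zero]
    apply Finset.sum_congr rfl
    intro k _
    rw [Nat.factorial_succ]
    push_cast
    have : (k:ℝ)+1 ≠ 0 := by positivity
    field_simp
  have hE : HasDerivAt (fun y : ℝ => Real.exp (-y)) (-Real.exp (-x)) x := by
    simpa using (hasDerivAt_neg x).exp
  have := hE.mul hS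
  refine this.congr_deriv ?_
  rw [hsum]
  have : (∑ k ∈ Finset.range (n+1), x ^ k / k.factorial)
      = (∑ k ∈ Finset.range n, x ^ k / k.factorial) + x ^ n / n.factorial := by
    rw [Finset.sum_range_succ]
  rw [this]
  ring

lemma integral_pow_exp_neg (n : ℕ) (x : ℝ) :
    ∫ t in (0:ℝ)..x, t ^ n * Real.exp (-t)
      = (n.factorial : ℝ) * (1 - Real.exp (-x) * ∑ k ∈ Finset.range (n+1), x ^ k / k.factorial) := by
  have key : ∀ y : ℝ, HasDerivAt
      (fun y : ℝ => (n.factorial : ℝ) * (1 - Real.exp (-y) * ∑ k ∈ Finset.range (n+1), y ^ k / k.factorial))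
      (y ^ n * Real.exp (-y)) y := by
    intro y
    have := ((hasDeriv_expsum n y).const_mul (n.factorial : ℝ)).neg.const_add (n.factorial : ℝ)
    have h2 : (n.factorial:ℝ) ≠ 0 := Nat.cast_ne_zero.2 (Nat.factorial_ne_zero n)
    refine (this.congr_deriv ?_).congr_of_eventuallyEq (Filter.Eventually.of_forall fun z => ?_)
    · field_simp
    · simp only [Pi.neg_apply]; ring
  have hcont : IntervalIntegrable (fun t : ℝ => t ^ n * Real.exp (-t)) MeasureTheory.volume 0 x := by
    apply Continuous.intervalIntegrable
    exact (continuous_pow n).mul (Real.continuous_exp.comp continuous_neg)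
  have := intervalIntegral.integral_eq_sub_of_hasDerivAt (fun y _ => key y) hcont
  rw [this]
  simp [Finset.sum_range_succ']

lemma term_le_aux (c n : ℕ) (x : ℝ) (hx : 0 ≤ x) (hcn : c ≤ n) :
    x ^ (n+1) / ((n+1).factorial : ℝ) ≤ x / (c+1) * (x ^ n / (n.factorial : ℝ)) := by
  rw [Nat.factorial_succ, pow_succ, div_mul_div_comm, mul_comm (x^n) x]
  push_cast
  gcongr

lemma term_lt_aux (c n : ℕ) (x : ℝ) (hx : 0 < x) (hcn : c < n) :
    x ^ (n+1) / ((n+1).factorial : ℝ) < x / (c+1) * (x ^ n / (n.factorial : ℝ)) := by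
  rw [Nat.factorial_succ, pow_succ, div_mul_div_comm, mul_comm (x^n) x]
  push_cast
  gcongr

lemma tail_lt (c : ℕ) (x : ℝ) (hx : 0 < x) :
    1 - Real.exp (-x) * ∑ k ∈ Finset.range (c+1), x ^ k / k.factorial < x / (c+1) := by
  set f : ℕ → ℝ := fun k => x ^ k / (k.factorial : ℝ) with hf
  have hsum : Summable f := Real.summable_pow_div_factorial x
  have hexp : Real.exp x = ∑' k, f k := by
    rw [Real.exp_eq_exp_ℝ, NormedSpace.exp_eq_tsum_div]
  have hfnn : ∀ k, 0 ≤ f k := fun k => by positivity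
  have htail1 : Summable (fun i => f (i + (c+1))) := (summable_nat_add_iff _).2 hsum
  have htailc : Summable (fun i => f (i + c)) := (summable_nat_add_iff _).2 hsum
  have hT : (∑ k ∈ Finset.range (c+1), f k) + ∑' i, f (i + (c+1)) = Real.exp x := by
    rw [hexp]; exact hsum.sum_add_tsum_nat_add _
  have step1 : (∑' i, f (i + (c+1))) < ∑' i, (x / (c+1)) * f (i + c) := by
    apply Summable.tsum_lt_tsum (i := 1) _ _ htail1 (htailc.mul_left _)
    · intro i
      show f (i + (c+1)) ≤ x / (c+1) * f (i + c)
      have h4 : i + (c+1) = (i+c) + 1 := by ring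
      rw [h4]
      exact term_le_aux c (i+c) x hx.le (by omega)
    · show f (1 + (c+1)) < x / (c+1) * f (1 + c)
      have h4 : 1 + (c+1) = (1+c) + 1 := by ring
      rw [h4]
      exact term_lt_aux c (1+c) x hx (by omega)
  have step2 : (∑' i, (x / (c+1)) * f (i + c)) ≤ (x / (c+1)) * Real.exp x := by
    rw [tsum_mul_left]
    apply mul_le_mul_of_nonneg_left _ (by positivity)
    have h2 := hsum.sum_add_tsum_nat_add c
    have h3 : 0 ≤ ∑ k ∈ Finset.range c, f k := Finset.sum_nonneg fun k _ => hfnn k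
    rw [hexp]
    linarith
  have hTlt : (∑' i, f (i + (c+1))) < (x / (c+1)) * Real.exp x := lt_of_lt_of_le step1 step2
  have hSval : (∑ k ∈ Finset.range (c+1), x ^ k / k.factorial)
      = Real.exp x - ∑' i, f (i + (c+1)) := by
    rw [← hT]; ring
  rw [hSval, mul_sub, Real.exp_neg, inv_mul_cancel₀ (Real.exp_ne_zero x)]
  have hlast : (Real.exp x)⁻¹ * (∑' i, f (i + (c+1))) < (Real.exp x)⁻¹ * ((x / (c+1)) * Real.exp x) := by
    apply mul_lt_mul_of_pos_left hTlt
    positivity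
  rw [mul_comm (x / (c+1)) (Real.exp x), ← mul_assoc, inv_mul_cancel₀ (Real.exp_ne_zero x), one_mul] at hlast
  linarith

lemma reg_lt (c : ℕ) (x : ℝ) (hx : 0 < x) : regIncGamma (c+1) x < x / (c+1) := by
  unfold regIncGamma
  simp only [Nat.add_sub_cancel]
  rw [integral_pow_exp_neg c x]
  have hc : (c.factorial : ℝ) ≠ 0 := Nat.cast_ne_zero.2 (Nat.factorial_ne_zero c)
  rw [one_div, inv_mul_cancel_left₀ hc]
  exact tail_lt c x hx

lemma reg_mono (b : ℕ) {a x : ℝ} (ha : 0 ≤ a) (hax : a ≤ x) :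
    regIncGamma b a ≤ regIncGamma b x := by
  unfold regIncGamma
  have hcont : ∀ u v : ℝ, IntervalIntegrable (fun t : ℝ => t ^ (b-1) * Real.exp (-t))
      MeasureTheory.volume u v := fun u v => Continuous.intervalIntegrable
    ((continuous_pow _).mul (Real.continuous_exp.comp continuous_neg)) u v
  have hsplit : (∫ t in (0:ℝ)..a, t ^ (b-1) * Real.exp (-t))
      + (∫ t in a..x, t ^ (b-1) * Real.exp (-t))
      = ∫ t in (0:ℝ)..x, t ^ (b-1) * Real.exp (-t) :=
    intervalIntegral.integral_add_adjacent_intervals (hcont 0 a) (hcont a x)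
  have hnn : 0 ≤ ∫ t in a..x, t ^ (b-1) * Real.exp (-t) := by
    apply intervalIntegral.integral_nonneg hax
    intro u hu
    have : 0 ≤ u := le_trans ha hu.1
    positivity
  have hfac : (0:ℝ) ≤ 1 / (Nat.factorial (b-1) : ℝ) := by positivity
  apply mul_le_mul_of_nonneg_left _ hfac
  linarith

/-- For `b ≥ 1` and `1/2 ≤ R < 1`, the `R`-quantile `m` of the Gamma(b,1) distribution
satisfies `m > R·b`. -/
theorem gamma_quantile_gt_rate_mul_shape (b : ℕ) (hb : 1 ≤ b) (R : ℝ)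
    (hR0 : 1 / 2 ≤ R) (hR1 : R < 1) (m : ℝ) (hm_pos : 0 < m)
    (hm : regIncGamma b m = R) :
    m > R * b := by
  obtain ⟨c, rfl⟩ : ∃ c, b = c + 1 := ⟨b - 1, by omega⟩
  by_contra h
  push_neg at h
  have hR : (0:ℝ) < R := lt_of_lt_of_le (by norm_num) hR0
  have hcast : ((c+1 : ℕ) : ℝ) = (c:ℝ) + 1 := by push_cast; ring
  have hx : 0 < R * (((c+1:ℕ)):ℝ) := by rw [hcast]; positivity
  have h1 : regIncGamma (c+1) m ≤ regIncGamma (c+1) (R * ((c+1:ℕ):ℝ)) :=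
    reg_mono _ hm_pos.le h
  have h2 := reg_lt c (R * ((c+1:ℕ):ℝ)) hx
  rw [hcast] at h1
  rw [hcast, mul_div_assoc, div_self (by positivity), mul_one] at h2
  rw [hm] at h1
  linarith
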